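/- Let 0 ≤ θ ≤ π/2 and let φ, α be real with α > 0, and set x = cos(θ)·cosh(u+iφ) for a real number u. If cosh(√(λ+u²)) = x for some complex λ (with √ the principal square root), then Re λ ≤ 0. Equivalently, if Re λ = α > 0 then |cosh(√(λ+u²)) − cos(θ)·cosh(u+iφ)| ≥ α/2. -/

import Mathlib

open Real

/-- `cosh a - cosh b ≥ (a² - b²)/2` for `0 ≤ b ≤ a`. -/
lemma cosh_sub_cosh_ge {a b : ℝ} (hb : 0 ≤ b) (hab : b ≤ a) :
    (a ^ 2 - b ^ 2) / 2 ≤ Real.cosh a - Real.cosh b := by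
  have hp : 0 ≤ (a + b) / 2 := by linarith
  have hq : 0 ≤ (a - b) / 2 := by linarith
  have h1 : (a + b) / 2 ≤ Real.sinh ((a + b) / 2) := Real.self_le_sinh_iff.2 hp
  have h2 : (a - b) / 2 ≤ Real.sinh ((a - b) / 2) := Real.self_le_sinh_iff.2 hq
  have ha : a = (a + b) / 2 + (a - b) / 2 := by ring
  have hbe : b = (a + b) / 2 - (a - b) / 2 := by ring
  have e1 : Real.cosh a - Real.cosh b = 2 * Real.sinh ((a + b) / 2) * Real.sinh ((a - b) / 2) := by
    rw [ha, hbe, Real.cosh_add, Real.cosh_sub]; ring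
  have hs1 : 0 ≤ Real.sinh ((a + b) / 2) := hp.trans h1
  nlinarith [mul_le_mul h1 h2 hq hs1]

/-- `cosh² a - cosh² b ≥ a² - b²` for `0 ≤ b ≤ a`. -/
lemma cosh_sq_sub_cosh_sq_ge {a b : ℝ} (hb : 0 ≤ b) (hab : b ≤ a) :
    a ^ 2 - b ^ 2 ≤ Real.cosh a ^ 2 - Real.cosh b ^ 2 := by
  have h := cosh_sub_cosh_ge (b := 2 * b) (a := 2 * a) (by linarith) (by linarith)
  have e1 : Real.cosh (2 * a) = Real.cosh a ^ 2 + Real.sinh a ^ 2 := Real.cosh_two_mul a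
  have e2 : Real.cosh (2 * b) = Real.cosh b ^ 2 + Real.sinh b ^ 2 := Real.cosh_two_mul b
  have f1 : Real.cosh a ^ 2 - Real.sinh a ^ 2 = 1 := Real.cosh_sq_sub_sinh_sq a
  have f2 : Real.cosh b ^ 2 - Real.sinh b ^ 2 = 1 := Real.cosh_sq_sub_sinh_sq b
  nlinarith

/-- `|cosh z|² = cosh²(re z) - sin²(im z)`. -/
lemma abs_cosh_sq (z : ℂ) :
    ‖Complex.cosh z‖ ^ 2
      = Real.cosh z.re ^ 2 - Real.sin z.im ^ 2 := by
  have hz : z = (z.re : ℂ) + (z.im : ℂ) * Complex.I := (Complex.re_add_im z).symm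
  have e : Complex.cosh z
      = (Real.cosh z.re * Real.cos z.im : ℝ)
        + (Real.sinh z.re * Real.sin z.im : ℝ) * Complex.I := by
    conv_lhs => rw [hz]
    rw [Complex.cosh_add, Complex.cosh_mul_I, Complex.sinh_mul_I,
      ← Complex.ofReal_cosh, ← Complex.ofReal_sinh, ← Complex.ofReal_cos,
      ← Complex.ofReal_sin]
    push_cast
    ring
  rw [e, Complex.sq_norm, Complex.normSq_add_mul_I]
  have h1 := Real.sin_sq_add_cos_sq z.im
  have h2 := Real.cosh_sq_sub_sinh_sq z.re
  nlinarith

lemma key_lemma (θ φ u β : ℝ) (hθ₀ : 0 ≤ θ) (hθ₁ : θ ≤ π / 2)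
    (hβ : 0 < β) (lam : ℂ) (hre : lam.re = β) :
    β / 2 ≤ ‖(Complex.cosh ((lam + (u : ℂ) ^ 2) ^ (1 / 2 : ℂ))
        - (Real.cos θ : ℂ) * Complex.cosh (u + φ * Complex.I))‖ := by
  set w : ℂ := lam + (u : ℂ) ^ 2 with hw
  set z : ℂ := w ^ (1 / 2 : ℂ) with hzdef
  have hz2 : z ^ 2 = w := by
    rw [hzdef, show (1 / 2 : ℂ) = (2 : ℂ)⁻¹ by norm_num]
    exact Complex.cpow_ofNat_inv_pow w 2
  have hwre : w.re = β + u ^ 2 := by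
    rw [hw, Complex.add_re, hre, ← Complex.ofReal_pow, Complex.ofReal_re]
  have hxy : z.re ^ 2 - z.im ^ 2 = β + u ^ 2 := by
    have h : (z ^ 2).re = β + u ^ 2 := by rw [hz2, hwre]
    rw [sq, Complex.mul_re] at h
    nlinarith
  set s : ℝ := Real.sqrt (β + u ^ 2) with hs
  have hsum_nonneg : (0 : ℝ) ≤ β + u ^ 2 := by positivity
  have hs2 : s ^ 2 = β + u ^ 2 := Real.sq_sqrt hsum_nonneg
  have hs0 : 0 ≤ s := Real.sqrt_nonneg _
  -- |cosh z| ≥ cosh s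
  have hx_ge : s ≤ |z.re| := by
    have h : s ^ 2 ≤ |z.re| ^ 2 := by rw [sq_abs]; nlinarith [sq_nonneg z.im]
    calc s = Real.sqrt (s ^ 2) := (Real.sqrt_sq hs0).symm
      _ ≤ Real.sqrt (|z.re| ^ 2) := Real.sqrt_le_sqrt h
      _ = |z.re| := Real.sqrt_sq (abs_nonneg _)
  have h1 : Real.cosh s ^ 2 ≤ ‖Complex.cosh z‖ ^ 2 := by
    rw [abs_cosh_sq]
    have hcsq := cosh_sq_sub_cosh_sq_ge hs0 hx_ge
    rw [Real.cosh_abs] at hcsq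
    have hsin : Real.sin z.im ^ 2 ≤ z.im ^ 2 := Real.sin_sq_le_sq
    nlinarith [sq_abs z.re]
  have hcz : Real.cosh s ≤ ‖Complex.cosh z‖ := by
    have h0 : (0 : ℝ) ≤ Real.cosh s := (Real.cosh_pos s).le
    nlinarith [norm_nonneg (Complex.cosh z)]
  -- |cos θ * cosh (u + φ I)| ≤ cosh |u|
  have hcos0 : 0 ≤ Real.cos θ := Real.cos_nonneg_of_mem_Icc
    ⟨by linarith [Real.pi_pos], hθ₁⟩
  have hcos1 : Real.cos θ ≤ 1 := Real.cos_le_one θ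
  have h2 : ‖(Real.cos θ : ℂ) * Complex.cosh ((u : ℂ) + (φ : ℂ) * Complex.I)‖
      ≤ Real.cosh |u| := by
    rw [norm_mul]
    have ha : ‖Complex.cosh ((u : ℂ) + (φ : ℂ) * Complex.I)‖ ≤ Real.cosh |u| := by
      have hsq := abs_cosh_sq ((u : ℂ) + (φ : ℂ) * Complex.I)
      have hre' : ((u : ℂ) + (φ : ℂ) * Complex.I).re = u := by simp
      have him' : ((u : ℂ) + (φ : ℂ) * Complex.I).im = φ := by simp
      rw [hre', him'] at hsq
      rw [← Real.cosh_abs] at hsq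
      have h0 : (0 : ℝ) ≤ Real.cosh |u| := (Real.cosh_pos _).le
      nlinarith [norm_nonneg (Complex.cosh ((u : ℂ) + (φ : ℂ) * Complex.I)),
        sq_nonneg (Real.sin φ)]
    rw [Complex.norm_real, Real.norm_of_nonneg hcos0]
    calc Real.cos θ * ‖Complex.cosh ((u : ℂ) + (φ : ℂ) * Complex.I)‖
        ≤ 1 * Real.cosh |u| :=
          mul_le_mul hcos1 ha (norm_nonneg _) zero_le_one
      _ = Real.cosh |u| := one_mul _
  -- combine
  have hus : |u| ≤ s := by
    have h : |u| ^ 2 ≤ s ^ 2 := by rw [sq_abs]; nlinarith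
    calc |u| = Real.sqrt (|u| ^ 2) := (Real.sqrt_sq (abs_nonneg u)).symm
      _ ≤ Real.sqrt (s ^ 2) := Real.sqrt_le_sqrt h
      _ = s := Real.sqrt_sq hs0
  have h3 : β / 2 ≤ Real.cosh s - Real.cosh |u| := by
    have hh := cosh_sub_cosh_ge (abs_nonneg u) hus
    have he : s ^ 2 - |u| ^ 2 = β := by rw [sq_abs]; nlinarith
    linarith [hh, he ▸ hh]
  have h4 : ‖Complex.cosh z‖
      - ‖(Real.cos θ : ℂ) * Complex.cosh ((u : ℂ) + (φ : ℂ) * Complex.I)‖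
      ≤ ‖Complex.cosh z
        - (Real.cos θ : ℂ) * Complex.cosh ((u : ℂ) + (φ : ℂ) * Complex.I)‖ := by
    simpa using
      norm_sub_norm_le (Complex.cosh z)
        ((Real.cos θ : ℂ) * Complex.cosh ((u : ℂ) + (φ : ℂ) * Complex.I))
  linarith

/-- If `cosh √(λ+u²) = cos θ · cosh (u + iφ)` then `Re λ ≤ 0`; equivalently, if
`Re λ = α > 0` then the difference has absolute value at least `α/2`. -/
theorem re_nonpos_of_cosh_eq (θ φ u α : ℝ) (hθ₀ : 0 ≤ θ) (hθ₁ : θ ≤ π / 2)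
    (hα : 0 < α) (lam : ℂ) :
    (Complex.cosh ((lam + (u : ℂ) ^ 2) ^ (1 / 2 : ℂ))
        = (Real.cos θ : ℂ) * Complex.cosh (u + φ * Complex.I) → lam.re ≤ 0) ∧
    (lam.re = α →
      α / 2 ≤ ‖(Complex.cosh ((lam + (u : ℂ) ^ 2) ^ (1 / 2 : ℂ))
        - (Real.cos θ : ℂ) * Complex.cosh (u + φ * Complex.I))‖) := by
  constructor
  · intro h
    by_contra hpos
    push_neg at hpos
    have hk := key_lemma θ φ u lam.re hθ₀ hθ₁ hpos lam rfl
    rw [h] at hk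
    simp at hk
    linarith
  · intro h
    exact key_lemma θ φ u α hθ₀ hθ₁ hα lam h
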